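/- For every positive integer q, the R-module R^{1/q} is an internal direct sum of finitely many R-submodules, each of which is isomorphic as an R-module to a conic module A_v for some v ∈ ℝ^d. Moreover, there exists q₀ such that for every integer q ≥ q₀ and every v ∈ ℝ^d, the conic module A_v is isomorphic to a direct summand of the R-module R^{1/q}. -/

import Mathlib

open Set

set_option synthInstance.maxHeartbeats 1000000
set_option maxHeartbeats 4000000

universe u

noncomputable section

/-- The embedding of the lattice `ℤ^d` into `ℝ^d`. -/
def ιZ (d : ℕ) (m : Fin d → ℤ) : Fin d → ℝ := fun j => (m j : ℝ)

/-- The embedding of `ℚ^d` into `ℝ^d`. -/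
def ιQ (d : ℕ) (u : Fin d → ℚ) : Fin d → ℝ := fun j => (u j : ℝ)

/-- The lattice points of the translated cone `C + v`, where
`C = {x | ∀ i, 0 ≤ n i x}`. -/
def latticePts {d t : ℕ} (n : Fin t → ((Fin d → ℝ) →ₗ[ℝ] ℝ)) (v : Fin d → ℝ) :
    Set (Fin d → ℤ) :=
  {m | ∀ i, 0 ≤ n i (ιZ d m - v)}

/-- The toric algebra `R = k[C ∩ ℤ^d]`, realized inside the rational-exponent
Laurent algebra `L_ℚ = AddMonoidAlgebra k (Fin d → ℚ)`: the `k`-subalgebra spanned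
(equivalently, generated) by the monomials `x^m` with `m ∈ C ∩ ℤ^d`. -/
def toricRQ (k : Type) [Field k] (d t : ℕ) (n : Fin t → ((Fin d → ℝ) →ₗ[ℝ] ℝ)) :
    Subalgebra k (AddMonoidAlgebra k (Fin d → ℚ)) :=
  Algebra.adjoin k
    {f | ∃ m : Fin d → ℤ, (∀ i, 0 ≤ n i (ιZ d m)) ∧
      f = AddMonoidAlgebra.single (fun j => (m j : ℚ)) 1}

/-- The conic module `A_v`: the `R`-submodule of `L_ℚ` spanned by the monomials
`x^m` with `m ∈ (C + v) ∩ ℤ^d`. -/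
def conicAQ (k : Type) [Field k] (d t : ℕ) (n : Fin t → ((Fin d → ℝ) →ₗ[ℝ] ℝ))
    (v : Fin d → ℝ) :
    Submodule ↥(toricRQ k d t n) (AddMonoidAlgebra k (Fin d → ℚ)) :=
  Submodule.span ↥(toricRQ k d t n)
    {f | ∃ m : Fin d → ℤ, (∀ i, 0 ≤ n i (ιZ d m - v)) ∧
      f = AddMonoidAlgebra.single (fun j => (m j : ℚ)) 1}

/-- The `R`-module `R^{1/q}`: the `R`-submodule of `L_ℚ` spanned by the monomials
`x^u` with `u ∈ C ∩ (1/q)ℤ^d`. -/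
def rootRq (k : Type) [Field k] (d t : ℕ) (n : Fin t → ((Fin d → ℝ) →ₗ[ℝ] ℝ))
    (q : ℕ) :
    Submodule ↥(toricRQ k d t n) (AddMonoidAlgebra k (Fin d → ℚ)) :=
  Submodule.span ↥(toricRQ k d t n)
    {f | ∃ u : Fin d → ℚ, (∀ j, ∃ z : ℤ, u j = (z : ℚ) / (q : ℚ)) ∧
      (∀ i, 0 ≤ n i (ιQ d u)) ∧ f = AddMonoidAlgebra.single u 1}


namespace S10
variable {k : Type} [Field k] {d t : ℕ} {n : Fin t → ((Fin d → ℝ) →ₗ[ℝ] ℝ)}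

lemma smul_def' (r : ↥(toricRQ k d t n)) (f : AddMonoidAlgebra k (Fin d → ℚ)) :
    r • f = (r : AddMonoidAlgebra k (Fin d → ℚ)) * f := rfl

def mulMono (k : Type) [Field k] (d t : ℕ) (n : Fin t → ((Fin d → ℝ) →ₗ[ℝ] ℝ)) (u : Fin d → ℚ) :
    AddMonoidAlgebra k (Fin d → ℚ) ≃ₗ[↥(toricRQ k d t n)] AddMonoidAlgebra k (Fin d → ℚ) where
  toFun f := AddMonoidAlgebra.single u 1 * f
  invFun f := AddMonoidAlgebra.single (-u) 1 * f
  map_add' := mul_add _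
  map_smul' r f := by simp only [smul_def', RingHom.id_apply]; ring
  left_inv f := by
    show AddMonoidAlgebra.single (-u) 1 * (AddMonoidAlgebra.single u 1 * f) = f
    rw [← mul_assoc, AddMonoidAlgebra.single_mul_single, neg_add_cancel, one_mul,
      ← AddMonoidAlgebra.one_def, one_mul]
  right_inv f := by
    show AddMonoidAlgebra.single u 1 * (AddMonoidAlgebra.single (-u) 1 * f) = f
    rw [← mul_assoc, AddMonoidAlgebra.single_mul_single, add_neg_cancel, one_mul,
      ← AddMonoidAlgebra.one_def, one_mul]

lemma mulMono_apply (u : Fin d → ℚ) (f : AddMonoidAlgebra k (Fin d → ℚ)) :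
    mulMono k d t n u f = AddMonoidAlgebra.single u 1 * f := rfl

lemma mulMono_single (u w : Fin d → ℚ) :
    mulMono k d t n u (AddMonoidAlgebra.single w 1) = AddMonoidAlgebra.single (u + w) 1 := by
  rw [mulMono_apply, AddMonoidAlgebra.single_mul_single, one_mul]

lemma iQ_add (x y : Fin d → ℚ) : ιQ d (x + y) = ιQ d x + ιQ d y := by
  funext j; simp [ιQ]

lemma iQ_neg (x : Fin d → ℚ) : ιQ d (-x) = -ιQ d x := by
  funext j; simp [ιQ]

lemma iQ_int (m : Fin d → ℤ) : ιQ d (fun j => (m j : ℚ)) = ιZ d m := by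
  funext j; simp [ιQ, ιZ]

lemma iZ_add (x y : Fin d → ℤ) : ιZ d (x + y) = ιZ d x + ιZ d y := by
  funext j; simp [ιZ]

/-- mapping a conic module by an integral monomial translation. -/
lemma map_conic (m₀ : Fin d → ℤ) (v : Fin d → ℝ) :
    Submodule.map (↑(mulMono k d t n (fun j => (m₀ j : ℚ))) :
        AddMonoidAlgebra k (Fin d → ℚ) →ₗ[↥(toricRQ k d t n)] AddMonoidAlgebra k (Fin d → ℚ))
      (conicAQ k d t n v) = conicAQ k d t n (v + ιZ d m₀) := by
  rw [conicAQ, conicAQ, Submodule.map_span]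
  congr 1
  ext g
  constructor
  · rintro ⟨f, ⟨m, hm, rfl⟩, rfl⟩
    refine ⟨m₀ + m, fun i => ?_, ?_⟩
    · have : ιZ d (m₀ + m) - (v + ιZ d m₀) = ιZ d m - v := by
        rw [iZ_add]; abel
      rw [this]; exact hm i
    · show mulMono k d t n _ _ = _
      rw [mulMono_single]
      congr 1
      funext j; push_cast; simp [Pi.add_apply]
  · rintro ⟨m, hm, rfl⟩
    refine ⟨AddMonoidAlgebra.single (fun j => ((m - m₀) j : ℚ)) 1, ⟨m - m₀, fun i => ?_, rfl⟩, ?_⟩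
    · have : ιZ d (m - m₀) - v = ιZ d m - (v + ιZ d m₀) := by
        funext j; simp [ιZ]; push_cast; ring
      rw [this]; exact hm i
    · show mulMono k d t n _ _ = _
      rw [mulMono_single]
      congr 1
      funext j
      push_cast
      simp [Pi.add_apply]

/-- conic modules with equal ceiling vectors coincide. -/
lemma conic_congr (hint : ∀ i (m : Fin d → ℤ), ∃ z : ℤ, n i (ιZ d m) = z)
    (v w : Fin d → ℝ) (h : ∀ i, ⌈n i v⌉ = ⌈n i w⌉) :
    conicAQ k d t n v = conicAQ k d t n w := by
  have key : ∀ (x y : Fin d → ℝ), (∀ i, ⌈n i x⌉ = ⌈n i y⌉) →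
      ∀ (m : Fin d → ℤ) i, 0 ≤ n i (ιZ d m - x) → 0 ≤ n i (ιZ d m - y) := by
    intro x y hxy m i hi
    obtain ⟨z, hz⟩ := hint i m
    rw [map_sub, sub_nonneg, hz] at hi ⊢
    rw [← Int.ceil_le] at hi ⊢
    rw [← hxy i]; exact hi
  rw [conicAQ, conicAQ]
  congr 1
  ext g
  constructor
  · rintro ⟨m, hm, rfl⟩; exact ⟨m, fun i => key v w h m i (hm i), rfl⟩
  · rintro ⟨m, hm, rfl⟩; exact ⟨m, fun i => key w v (fun i => (h i).symm) m i (hm i), rfl⟩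

/-- every element of the toric algebra has integral support. -/
lemma support_int (r : AddMonoidAlgebra k (Fin d → ℚ)) (hr : r ∈ toricRQ k d t n) :
    ∀ u ∈ r.coeff.support, ∀ j, ∃ z : ℤ, u j = (z : ℚ) := by
  classical
  induction hr using Algebra.adjoin_induction with
  | mem x hx =>
    obtain ⟨m, _, rfl⟩ := hx
    intro u hu j
    have := Finsupp.support_single_subset hu
    simp only [Finset.mem_singleton] at this
    exact ⟨m j, by rw [this]⟩
  | algebraMap r =>
    intro u hu j
    have : (algebraMap k (AddMonoidAlgebra k (Fin d → ℚ)) r) =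
        AddMonoidAlgebra.single 0 r := rfl
    rw [this] at hu
    have := Finsupp.support_single_subset hu
    simp only [Finset.mem_singleton] at this
    exact ⟨0, by rw [this]; simp⟩
  | add x y hx hy ihx ihy =>
    intro u hu j
    rw [AddMonoidAlgebra.coeff_add] at hu
    rcases Finset.mem_union.mp (Finsupp.support_add hu) with h | h
    · exact ihx u h j
    · exact ihy u h j
  | mul x y hx hy ihx ihy =>
    intro u hu j
    rcases Finset.mem_add.mp (AddMonoidAlgebra.support_coeff_mul_subset x y hu) with ⟨u₁, h₁, u₂, h₂, rfl⟩
    obtain ⟨z₁, hz₁⟩ := ihx u₁ h₁ j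
    obtain ⟨z₂, hz₂⟩ := ihy u₂ h₂ j
    exact ⟨z₁ + z₂, by rw [Pi.add_apply, hz₁, hz₂]; push_cast; ring⟩

/-- the `R`-submodule of elements all of whose exponents have fractional-part vector
satisfying a predicate `p`. -/
def clsSub (k : Type) [Field k] (d t : ℕ) (n : Fin t → ((Fin d → ℝ) →ₗ[ℝ] ℝ))
    (p : (Fin d → ℚ) → Prop) :
    Submodule ↥(toricRQ k d t n) (AddMonoidAlgebra k (Fin d → ℚ)) where
  carrier := {f | ∀ u ∈ f.coeff.support, p (fun j => Int.fract (u j))}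
  zero_mem' := by simp
  add_mem' {f g} hf hg := by
    intro u hu
    rw [AddMonoidAlgebra.coeff_add] at hu
    rcases Finset.mem_union.mp (Finsupp.support_add hu) with h | h
    · exact hf u h
    · exact hg u h
  smul_mem' r f hf := by
    classical
    intro u hu
    rw [smul_def'] at hu
    rcases Finset.mem_add.mp (AddMonoidAlgebra.support_coeff_mul_subset _ f hu) with ⟨u₁, h₁, u₂, h₂, rfl⟩
    have hcls : (fun j => Int.fract ((u₁ + u₂) j)) = fun j => Int.fract (u₂ j) := by
      funext j
      obtain ⟨z, hz⟩ := support_int (r : AddMonoidAlgebra k (Fin d → ℚ)) r.2 u₁ h₁ j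
      rw [Pi.add_apply, hz, Int.fract_intCast_add]
    rw [hcls]
    exact hf u₂ h₂

lemma single_mem_clsSub {p : (Fin d → ℚ) → Prop} {w : Fin d → ℚ}
    (hp : p (fun j => Int.fract (w j))) (c : k) :
    AddMonoidAlgebra.single w c ∈ clsSub k d t n p := by
  intro u hu
  have := Finsupp.support_single_subset hu
  simp only [Finset.mem_singleton] at this
  rw [this]; exact hp

lemma clsSub_disjoint (p : (Fin d → ℚ) → Prop) :
    Disjoint (clsSub k d t n p) (clsSub k d t n (fun c => ¬ p c)) := by
  rw [disjoint_iff_inf_le]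
  intro f hf
  rw [Submodule.mem_bot, ← AddMonoidAlgebra.coeff_eq_zero, ← Finsupp.support_eq_empty]
  by_contra hne
  obtain ⟨u, hu⟩ := Finset.nonempty_iff_ne_empty.mpr hne
  exact hf.2 u hu (hf.1 u hu)

/-- fractional-offset vector attached to `a : Fin d → Fin q`. -/
def aQv (d q : ℕ) (a : Fin d → Fin q) : Fin d → ℚ := fun j => (a j : ℚ) / q

/-- the component of `R^{1/q}` with fractional class `a`. -/
def Pfun (k : Type) [Field k] (d t : ℕ) (n : Fin t → ((Fin d → ℝ) →ₗ[ℝ] ℝ))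
    (q : ℕ) (a : Fin d → Fin q) :
    Submodule ↥(toricRQ k d t n) (AddMonoidAlgebra k (Fin d → ℚ)) :=
  Submodule.map (↑(mulMono k d t n (aQv d q a)) :
      AddMonoidAlgebra k (Fin d → ℚ) →ₗ[↥(toricRQ k d t n)] AddMonoidAlgebra k (Fin d → ℚ))
    (conicAQ k d t n (-(ιQ d (aQv d q a))))

lemma Pfun_eq_span (q : ℕ) (a : Fin d → Fin q) :
    Pfun k d t n q a = Submodule.span ↥(toricRQ k d t n)
      {f | ∃ m : Fin d → ℤ, (∀ i, 0 ≤ n i (ιZ d m + ιQ d (aQv d q a))) ∧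
        f = AddMonoidAlgebra.single (aQv d q a + fun j => (m j : ℚ)) 1} := by
  rw [Pfun, conicAQ, Submodule.map_span]
  congr 1
  ext g
  constructor
  · rintro ⟨f, ⟨m, hm, rfl⟩, rfl⟩
    refine ⟨m, fun i => ?_, ?_⟩
    · have := hm i; rwa [sub_neg_eq_add] at this
    · show mulMono k d t n _ _ = _
      rw [mulMono_single]
  · rintro ⟨m, hm, rfl⟩
    refine ⟨AddMonoidAlgebra.single (fun j => (m j : ℚ)) 1, ⟨m, fun i => ?_, rfl⟩, ?_⟩
    · rw [sub_neg_eq_add]; exact hm i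
    · show mulMono k d t n _ _ = _
      rw [mulMono_single]

lemma Pfun_le_root (q : ℕ) (hq : 0 < q) (a : Fin d → Fin q) :
    Pfun k d t n q a ≤ rootRq k d t n q := by
  rw [Pfun_eq_span, rootRq]
  apply Submodule.span_le.mpr
  rintro g ⟨m, hm, rfl⟩
  apply Submodule.subset_span
  refine ⟨aQv d q a + fun j => (m j : ℚ), fun j => ?_, fun i => ?_, rfl⟩
  · refine ⟨(a j : ℤ) + q * m j, ?_⟩
    have hq' : (q : ℚ) ≠ 0 := by exact_mod_cast hq.ne'
    rw [Pi.add_apply]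
    show aQv d q a j + (m j : ℚ) = _
    rw [aQv]
    push_cast
    field_simp
  · have : ιQ d (aQv d q a + fun j => (m j : ℚ)) = ιZ d m + ιQ d (aQv d q a) := by
      rw [iQ_add, iQ_int]; ring
    rw [this]; exact hm i

lemma Pfun_sup (q : ℕ) (hq : 0 < q) :
    (⨆ a : Fin d → Fin q, Pfun k d t n q a) = rootRq k d t n q := by
  apply le_antisymm
  · exact iSup_le fun a => Pfun_le_root q hq a
  · rw [rootRq]
    apply Submodule.span_le.mpr
    rintro g ⟨u, hu, hcone, rfl⟩
    choose z hz using hu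
    have hqZ : (0 : ℤ) < (q : ℤ) := by exact_mod_cast hq
    have hq' : (q : ℚ) ≠ 0 := by exact_mod_cast hq.ne'
    set a : Fin d → Fin q := fun j => ⟨(z j % q).toNat, by
      have h1 := Int.emod_nonneg (z j) hqZ.ne'
      have h2 := Int.emod_lt_of_pos (z j) hqZ
      omega⟩ with ha
    set m : Fin d → ℤ := fun j => z j / q with hmdef
    have hu_eq : u = aQv d q a + fun j => (m j : ℚ) := by
      funext j
      have h1 := Int.emod_nonneg (z j) hqZ.ne'
      have h2 : (q : ℤ) * (z j / q) + z j % q = z j := by have := Int.mul_ediv_add_emod (z j) q; linarith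
      have haj : ((a j : ℕ) : ℚ) = ((z j % q : ℤ) : ℚ) := by
        show (((z j % q).toNat : ℕ) : ℚ) = _
        exact_mod_cast congrArg (fun x : ℤ => (x : ℚ)) (Int.toNat_of_nonneg h1)
      rw [hz j, Pi.add_apply]
      show (z j : ℚ) / q = aQv d q a j + (m j : ℚ)
      rw [aQv, haj, hmdef]
      have h2' : ((q : ℤ) : ℚ) * ((z j / q : ℤ) : ℚ) + ((z j % q : ℤ) : ℚ) = ((z j : ℤ) : ℚ) := by
        exact_mod_cast congrArg (fun x : ℤ => (x : ℚ)) h2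
      push_cast at h2' ⊢
      field_simp
      linarith [h2']
    apply Submodule.mem_iSup_of_mem a
    rw [Pfun_eq_span]
    apply Submodule.subset_span
    refine ⟨m, fun i => ?_, by rw [hu_eq]⟩
    have : ιZ d m + ιQ d (aQv d q a) = ιQ d u := by
      rw [hu_eq, iQ_add, iQ_int]; ring
    rw [this]; exact hcone i

lemma aQv_fract (q : ℕ) (hq : 0 < q) (a : Fin d → Fin q) (j : Fin d) :
    Int.fract (aQv d q a j) = aQv d q a j := by
  rw [aQv]
  apply Int.fract_eq_self.mpr
  constructor
  · apply div_nonneg (by positivity) (by positivity)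
  · rw [div_lt_one (by exact_mod_cast hq)]
    exact_mod_cast (a j).2

lemma Pfun_le_cls (q : ℕ) (hq : 0 < q) (a : Fin d → Fin q) :
    Pfun k d t n q a ≤ clsSub k d t n (fun c => c = aQv d q a) := by
  rw [Pfun_eq_span]
  apply Submodule.span_le.mpr
  rintro g ⟨m, hm, rfl⟩
  apply single_mem_clsSub
  funext j
  rw [Pi.add_apply, Int.fract_add_intCast, aQv_fract q hq]

lemma clsSub_mono {p p' : (Fin d → ℚ) → Prop} (h : ∀ c, p c → p' c) :
    clsSub k d t n p ≤ clsSub k d t n p' :=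
  fun _ hf u hu => h _ (hf u hu)

lemma aQv_inj (q : ℕ) (hq : 0 < q) {a b : Fin d → Fin q} (h : aQv d q a = aQv d q b) :
    a = b := by
  funext j
  have := congrFun h j
  rw [aQv, aQv] at this
  have hq' : (q : ℚ) ≠ 0 := by exact_mod_cast hq.ne'
  have : ((a j : ℕ) : ℚ) = ((b j : ℕ) : ℚ) := by
    field_simp at this; exact_mod_cast this
  have : (a j : ℕ) = (b j : ℕ) := by exact_mod_cast this
  exact Fin.ext this

lemma Pfun_indep (q : ℕ) (hq : 0 < q) : iSupIndep (Pfun k d t n q) := by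
  intro a
  refine Disjoint.mono (Pfun_le_cls q hq a) ?_ (clsSub_disjoint (fun c => c = aQv d q a))
  apply iSup₂_le
  intro b hb
  refine le_trans (Pfun_le_cls q hq b) (clsSub_mono ?_)
  rintro c rfl hc
  exact hb (aQv_inj q hq hc)

lemma part1 (q : ℕ) (hq : 0 < q) :
    ∃ (N : ℕ) (P : Fin N → Submodule ↥(toricRQ k d t n) (AddMonoidAlgebra k (Fin d → ℚ))),
      (∀ j, P j ≤ rootRq k d t n q) ∧
      iSupIndep P ∧
      (⨆ j, P j) = rootRq k d t n q ∧
      (∀ j, ∃ v : Fin d → ℝ,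
        Nonempty (↥(P j) ≃ₗ[↥(toricRQ k d t n)] ↥(conicAQ k d t n v))) := by
  refine ⟨q ^ d, fun j => Pfun k d t n q (finFunctionFinEquiv.symm j), ?_, ?_, ?_, ?_⟩
  · exact fun j => Pfun_le_root q hq _
  · exact (Pfun_indep q hq).comp finFunctionFinEquiv.symm.injective
  · exact (Equiv.iSup_comp (e := finFunctionFinEquiv.symm) (g := Pfun k d t n q)).trans
      (Pfun_sup q hq)
  · intro j
    refine ⟨-(ιQ d (aQv d q (finFunctionFinEquiv.symm j))), ⟨?_⟩⟩
    exact ((mulMono k d t n (aQv d q (finFunctionFinEquiv.symm j))).submoduleMap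
      (conicAQ k d t n (-(ιQ d (aQv d q (finFunctionFinEquiv.symm j)))))).symm

lemma pos_pt (hne : ∀ i, n i ≠ 0)
    (hfull : (interior {x : Fin d → ℝ | ∀ i, 0 ≤ n i x}).Nonempty) :
    ∃ y : Fin d → ℝ, ∀ i, 0 < n i y := by
  obtain ⟨x₀, hx₀⟩ := hfull
  refine ⟨x₀, fun i => ?_⟩
  rcases Metric.mem_nhds_iff.mp (mem_interior_iff_mem_nhds.mp hx₀) with ⟨ε, hε, hball⟩
  by_contra h
  push_neg at h
  have hx₀C : ∀ i', 0 ≤ n i' x₀ := interior_subset hx₀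
  have h0 : n i x₀ = 0 := le_antisymm h (hx₀C i)
  obtain ⟨z, hz⟩ : ∃ z, n i z ≠ 0 := by
    by_contra hz; push_neg at hz; exact hne i (LinearMap.ext hz)
  set z' := if 0 < n i z then -z else z with hz'def
  have hz' : n i z' < 0 := by
    rw [hz'def]
    split_ifs with hc
    · rw [map_neg]; linarith
    · push_neg at hc; exact lt_of_le_of_ne hc hz
  have hznz : z' ≠ 0 := by
    intro hzz; rw [hzz, map_zero] at hz'; linarith
  have hnorm : 0 < ‖z'‖ := norm_pos_iff.mpr hznz
  set δ := ε / (2 * ‖z'‖) with hδdef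
  have hδ : 0 < δ := by positivity
  have hmem : x₀ + δ • z' ∈ Metric.ball x₀ ε := by
    rw [Metric.mem_ball, dist_self_add_left, norm_smul, Real.norm_eq_abs, abs_of_pos hδ,
      hδdef]
    rw [div_mul_eq_mul_div, mul_comm]
    rw [div_lt_iff₀ (by positivity)]
    nlinarith
  have := (hball hmem) i
  rw [map_add, h0, map_smul, zero_add, smul_eq_mul] at this
  nlinarith

lemma exists_bound (φ : (Fin d → ℝ) →ₗ[ℝ] ℝ) : ∃ B : ℝ, 0 ≤ B ∧ ∀ x, |φ x| ≤ B * ‖x‖ := by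
  let ψ := LinearMap.toContinuousLinearMap φ
  refine ⟨‖ψ‖, norm_nonneg _, fun x => ?_⟩
  have := ψ.le_opNorm x
  simpa [ψ, Real.norm_eq_abs] using this

lemma grid (q : ℕ) (hq : 0 < q) (z : Fin d → ℝ) :
    ∃ w : Fin d → ℚ, (∀ j, ∃ zz : ℤ, w j = (zz : ℚ) / q) ∧ dist (ιQ d w) z ≤ 1 / q := by
  have hq' : (0 : ℝ) < q := by exact_mod_cast hq
  refine ⟨fun j => ((⌈(q : ℝ) * z j⌉ : ℤ) : ℚ) / q, fun j => ⟨⌈(q : ℝ) * z j⌉, rfl⟩, ?_⟩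
  rw [dist_pi_le_iff (by positivity)]
  intro j
  have h1 : (q : ℝ) * z j ≤ (⌈(q : ℝ) * z j⌉ : ℝ) := Int.le_ceil _
  have h2 : ((⌈(q : ℝ) * z j⌉ : ℤ) : ℝ) < (q : ℝ) * z j + 1 := Int.ceil_lt_add_one _
  rw [Real.dist_eq]
  have heq : ιQ d (fun j => ((⌈(q : ℝ) * z j⌉ : ℤ) : ℚ) / q) j - z j
      = (((⌈(q : ℝ) * z j⌉ : ℤ) : ℝ) - q * z j) / q := by
    rw [ιQ]
    push_cast
    field_simp
  rw [heq, abs_div, abs_of_pos hq', div_le_div_iff_of_pos_right hq']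
  rw [abs_le]
  constructor <;> linarith

lemma cell_ball [Nonempty (Fin t)] (y₀ : Fin d → ℝ) (hy₀ : ∀ i, 0 < n i y₀)
    (c : Fin t → ℤ) (x : Fin d → ℝ) (hx : ∀ i, (c i : ℝ) - 1 < n i x ∧ n i x ≤ c i) :
    ∃ (z : Fin d → ℝ) (r : ℝ), 0 < r ∧
      ∀ w : Fin d → ℝ, dist w z < r → ∀ i, (c i : ℝ) - 1 < n i w ∧ n i w ≤ c i := by
  have hne : (Finset.univ : Finset (Fin t)).Nonempty := Finset.univ_nonempty
  set s := (Finset.univ.inf' hne fun i => (n i x - ((c i : ℝ) - 1)) / n i y₀) / 2 with hsdef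
  have hs0 : 0 < s := by
    rw [hsdef]
    have : 0 < Finset.univ.inf' hne fun i => (n i x - ((c i : ℝ) - 1)) / n i y₀ := by
      rw [Finset.lt_inf'_iff]
      exact fun i _ => div_pos (by linarith [(hx i).1]) (hy₀ i)
    linarith
  have hslt : ∀ i, s * n i y₀ < n i x - ((c i : ℝ) - 1) := by
    intro i
    have h1 : s < (n i x - ((c i : ℝ) - 1)) / n i y₀ := by
      rw [hsdef]
      calc _ < Finset.univ.inf' hne fun i => (n i x - ((c i : ℝ) - 1)) / n i y₀ := by
              apply half_lt_self
              rw [Finset.lt_inf'_iff]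
              exact fun i _ => div_pos (by linarith [(hx i).1]) (hy₀ i)
        _ ≤ _ := Finset.inf'_le _ (Finset.mem_univ i)
    rw [lt_div_iff₀ (hy₀ i)] at h1
    linarith
  set z := x - s • y₀ with hzdef
  have hz : ∀ i, (c i : ℝ) - 1 < n i z ∧ n i z < c i := by
    intro i
    rw [hzdef, map_sub, map_smul, smul_eq_mul]
    constructor
    · have := hslt i; linarith
    · have h1 : 0 < s * n i y₀ := mul_pos hs0 (hy₀ i)
      have := (hx i).2
      linarith
  have hO : IsOpen {w : Fin d → ℝ | ∀ i, (c i : ℝ) - 1 < n i w ∧ n i w < c i} := by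
    have : {w : Fin d → ℝ | ∀ i, (c i : ℝ) - 1 < n i w ∧ n i w < c i}
        = ⋂ i, (n i) ⁻¹' (Set.Ioo ((c i : ℝ) - 1) (c i)) := by
      ext w; simp [Set.mem_iInter, Set.mem_Ioo]
    rw [this]
    exact isOpen_iInter_of_finite fun i =>
      ((n i).continuous_of_finiteDimensional).isOpen_preimage _ isOpen_Ioo
  rcases Metric.isOpen_iff.mp hO z hz with ⟨r, hr, hball⟩
  refine ⟨z, r, hr, fun w hw i => ?_⟩
  have := hball hw i
  exact ⟨this.1, le_of_lt this.2⟩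

lemma cell_grid [Nonempty (Fin t)] (y₀ : Fin d → ℝ) (hy₀ : ∀ i, 0 < n i y₀)
    (c : Fin t → ℤ) :
    ∃ q₁ : ℕ, 0 < q₁ ∧
      ((∃ x : Fin d → ℝ, ∀ i, (c i : ℝ) - 1 < n i x ∧ n i x ≤ c i) →
        ∀ q : ℕ, q₁ ≤ q → ∃ w : Fin d → ℚ, (∀ j, ∃ zz : ℤ, w j = (zz : ℚ) / q) ∧
          ∀ i, (c i : ℝ) - 1 < n i (ιQ d w) ∧ n i (ιQ d w) ≤ c i) := by
  by_cases hcell : ∃ x : Fin d → ℝ, ∀ i, (c i : ℝ) - 1 < n i x ∧ n i x ≤ c i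
  · obtain ⟨x, hx⟩ := hcell
    obtain ⟨z, r, hr, hball⟩ := cell_ball y₀ hy₀ c x hx
    refine ⟨⌈2 / r⌉₊ + 1, Nat.succ_pos _, fun _ q hq => ?_⟩
    have hq0 : 0 < q := lt_of_lt_of_le (Nat.succ_pos _) hq
    obtain ⟨w, hw1, hw2⟩ := grid q hq0 z
    refine ⟨w, hw1, ?_⟩
    apply hball
    have hqR : (0 : ℝ) < q := by exact_mod_cast hq0
    have h2r : 2 / r ≤ (q : ℝ) := by
      calc 2 / r ≤ (⌈2 / r⌉₊ : ℝ) := Nat.le_ceil _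
        _ ≤ (⌈2 / r⌉₊ + 1 : ℕ) := by push_cast; linarith
        _ ≤ (q : ℝ) := by exact_mod_cast hq
    have h1q : 1 / (q : ℝ) < r := by
      rw [div_lt_iff₀ hqR]
      rw [div_le_iff₀ hr] at h2r
      nlinarith
    exact lt_of_le_of_lt hw2 h1q
  · exact ⟨1, Nat.one_pos, fun h => absurd h hcell⟩

lemma tpos (hd : 1 ≤ d) (hpointed : Submodule.span ℝ (Set.range n) = ⊤) : 0 < t := by
  by_contra ht
  push_neg at ht
  interval_cases t
  have hempty : (Set.range n) = ∅ := Set.range_eq_empty _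
  rw [hempty, Submodule.span_empty] at hpointed
  have hmem : (LinearMap.proj (⟨0, hd⟩ : Fin d) : (Fin d → ℝ) →ₗ[ℝ] ℝ) ∈
      (⊤ : Submodule ℝ ((Fin d → ℝ) →ₗ[ℝ] ℝ)) := Submodule.mem_top
  rw [← hpointed, Submodule.mem_bot] at hmem
  have h1 : (LinearMap.proj (⟨0, hd⟩ : Fin d) : (Fin d → ℝ) →ₗ[ℝ] ℝ) (fun _ => 1) = 1 := rfl
  rw [hmem] at h1
  rw [LinearMap.zero_apply] at h1
  exact zero_ne_one h1

lemma part2 (hd : 1 ≤ d)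
    (hne : ∀ i, n i ≠ 0)
    (hint : ∀ i (m : Fin d → ℤ), ∃ z : ℤ, n i (ιZ d m) = z)
    (hfull : (interior {x : Fin d → ℝ | ∀ i, 0 ≤ n i x}).Nonempty)
    (hpointed : Submodule.span ℝ (Set.range n) = ⊤) :
    ∃ q₀ : ℕ, 0 < q₀ ∧ ∀ q : ℕ, q₀ ≤ q → ∀ v : Fin d → ℝ,
      ∃ P Q : Submodule ↥(toricRQ k d t n) (AddMonoidAlgebra k (Fin d → ℚ)),
        P ≤ rootRq k d t n q ∧ Q ≤ rootRq k d t n q ∧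
        P ⊓ Q = ⊥ ∧ P ⊔ Q = rootRq k d t n q ∧
        Nonempty (↥P ≃ₗ[↥(toricRQ k d t n)] ↥(conicAQ k d t n v)) := by
  have ht : 0 < t := tpos hd hpointed
  haveI : Nonempty (Fin t) := ⟨⟨0, ht⟩⟩
  obtain ⟨y₀, hy₀⟩ := pos_pt hne hfull
  choose B hB0 hB using fun i => exists_bound (n i)
  set hiB : Fin t → ℤ := fun i => (⌈B i⌉₊ : ℤ) + 1 with hiBdef
  set T : Finset (Fin t → ℤ) := Finset.Icc (fun i => -hiB i) hiB with hTdef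
  choose qf hqf1 hqf2 using fun c : Fin t → ℤ => cell_grid (n := n) y₀ hy₀ c
  refine ⟨max 1 (T.sup qf), lt_of_lt_of_le Nat.one_pos (le_max_left _ _), fun q hq v => ?_⟩
  have hq0 : 0 < q := lt_of_lt_of_le Nat.one_pos (le_trans (le_max_left _ _) hq)
  set v' : Fin d → ℝ := fun j => Int.fract (v j) with hv'def
  set m₀ : Fin d → ℤ := fun j => ⌊v j⌋ with hm₀def
  have hv : v = v' + ιZ d m₀ := by
    funext j
    show v j = Int.fract (v j) + ((⌊v j⌋ : ℤ) : ℝ)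
    rw [Int.fract]
    ring
  set c : Fin t → ℤ := fun i => ⌈n i v'⌉ with hcdef
  have hc_cell : ∀ i, (c i : ℝ) - 1 < n i v' ∧ n i v' ≤ c i := by
    intro i
    constructor
    · have := Int.ceil_lt_add_one (n i v'); rw [hcdef]; linarith
    · exact Int.le_ceil _
  have hnormv' : ‖v'‖ ≤ 1 := by
    rw [pi_norm_le_iff_of_nonneg zero_le_one]
    intro j
    rw [hv'def, Real.norm_eq_abs, abs_of_nonneg (Int.fract_nonneg _)]
    exact le_of_lt (Int.fract_lt_one _)
  have hbound : ∀ i, |n i v'| ≤ B i := by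
    intro i
    calc |n i v'| ≤ B i * ‖v'‖ := hB i v'
      _ ≤ B i * 1 := by nlinarith [hB0 i]
      _ = B i := mul_one _
  have hcT : c ∈ T := by
    rw [hTdef, Finset.mem_Icc]
    constructor <;> (rw [Pi.le_def]; intro i)
    · have h1 : -(B i) ≤ n i v' := by have := abs_le.mp (hbound i); linarith [this.1]
      have h2 : ((-hiB i : ℤ) : ℝ) ≤ n i v' := by
        rw [hiBdef]
        push_cast
        have := Nat.le_ceil (B i)
        linarith
      have h3 : ((-hiB i : ℤ) : ℝ) ≤ (c i : ℝ) :=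
        le_trans h2 (le_trans (Int.le_ceil _) (by rw [hcdef]))
      exact_mod_cast h3
    · rw [hcdef]
      apply Int.ceil_le.mpr
      have h1 : n i v' ≤ B i := by have := abs_le.mp (hbound i); linarith [this.2]
      rw [hiBdef]
      push_cast
      have := Nat.le_ceil (B i)
      linarith
  have hqge : qf c ≤ q :=
    le_trans (le_trans (Finset.le_sup hcT) (le_max_right 1 _)) hq
  obtain ⟨w, hw1, hw2⟩ := hqf2 c ⟨v', hc_cell⟩ q hqge
  choose zz hzz using hw1
  have hqZ : (0 : ℤ) < (q : ℤ) := by exact_mod_cast hq0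
  have hq' : (q : ℚ) ≠ 0 := by exact_mod_cast hq0.ne'
  set a : Fin d → Fin q := fun j => ⟨((-(zz j)) % q).toNat, by
    have h1 := Int.emod_nonneg (-(zz j)) hqZ.ne'
    have h2 := Int.emod_lt_of_pos (-(zz j)) hqZ
    omega⟩ with hadef
  set M : Fin d → ℤ := fun j => -((-(zz j)) / q) with hMdef
  have hwq : w = (fun j => (M j : ℚ)) + (-(aQv d q a)) := by
    funext j
    have h1 := Int.emod_nonneg (-(zz j)) hqZ.ne'
    have h2 : (q : ℤ) * ((-(zz j)) / q) + (-(zz j)) % q = -(zz j) :=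
      by have := Int.mul_ediv_add_emod (-(zz j)) q; linarith
    have haj : ((a j : ℕ) : ℚ) = (((-(zz j)) % q : ℤ) : ℚ) := by
      show ((((-(zz j)) % q).toNat : ℕ) : ℚ) = _
      exact_mod_cast congrArg (fun x : ℤ => (x : ℚ)) (Int.toNat_of_nonneg h1)
    rw [Pi.add_apply, Pi.neg_apply, hzz j]
    show (zz j : ℚ) / q = (M j : ℚ) + -(aQv d q a j)
    rw [aQv, haj, hMdef]
    have h2' : ((q : ℤ) : ℚ) * (((-(zz j)) / q : ℤ) : ℚ) + (((-(zz j)) % q : ℤ) : ℚ)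
        = ((-(zz j) : ℤ) : ℚ) := by exact_mod_cast congrArg (fun x : ℤ => (x : ℚ)) h2
    push_cast at h2' ⊢
    field_simp
    linarith [h2']
  have hiQw : ιQ d w = -(ιQ d (aQv d q a)) + ιZ d M := by
    rw [hwq, iQ_add, iQ_neg, iQ_int]
    ring
  have hceil : ∀ i, ⌈n i v'⌉ = ⌈n i (ιQ d w)⌉ := by
    intro i
    have h1 : ⌈n i (ιQ d w)⌉ = c i := Int.ceil_eq_iff.mpr ⟨(hw2 i).1, (hw2 i).2⟩
    rw [h1, hcdef]
  have E0 : conicAQ k d t n v' = conicAQ k d t n (ιQ d w) := conic_congr hint _ _ hceil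
  have E1 : Submodule.map (↑(mulMono k d t n (fun j => (M j : ℚ))) :
        AddMonoidAlgebra k (Fin d → ℚ) →ₗ[↥(toricRQ k d t n)] AddMonoidAlgebra k (Fin d → ℚ))
      (conicAQ k d t n (-(ιQ d (aQv d q a)))) = conicAQ k d t n (ιQ d w) := by
    rw [map_conic, ← hiQw]
  have E2 : Submodule.map (↑(mulMono k d t n (fun j => (m₀ j : ℚ))) :
        AddMonoidAlgebra k (Fin d → ℚ) →ₗ[↥(toricRQ k d t n)] AddMonoidAlgebra k (Fin d → ℚ))
      (conicAQ k d t n v') = conicAQ k d t n v := by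
    rw [map_conic, ← hv]
  refine ⟨Pfun k d t n q a, ⨆ b, ⨆ _ : b ≠ a, Pfun k d t n q b,
    Pfun_le_root q hq0 a, iSup₂_le fun b _ => Pfun_le_root q hq0 b,
    disjoint_iff.mp (Pfun_indep q hq0 a), ?_, ⟨?_⟩⟩
  · apply le_antisymm
    · exact sup_le (Pfun_le_root q hq0 a) (iSup₂_le fun b _ => Pfun_le_root q hq0 b)
    · rw [← Pfun_sup q hq0]
      apply iSup_le
      intro b
      by_cases hb : b = a
      · subst hb; exact le_sup_left
      · exact le_sup_of_le_right (le_iSup₂ (f := fun b _ => Pfun k d t n q b) b hb)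
  · -- the chain of isomorphisms
    exact (((mulMono k d t n (aQv d q a)).submoduleMap
        (conicAQ k d t n (-(ιQ d (aQv d q a))))).symm.trans
      (((mulMono k d t n (fun j => (M j : ℚ))).submoduleMap
          (conicAQ k d t n (-(ιQ d (aQv d q a))))).trans
        ((LinearEquiv.ofEq _ _ (E1.trans E0.symm)).trans
          (((mulMono k d t n (fun j => (m₀ j : ℚ))).submoduleMap
              (conicAQ k d t n v')).trans
            (LinearEquiv.ofEq _ _ E2)))))

end S10

/-- for every `q > 0`, `R^{1/q}` is an internal direct sum of finitely
many `R`-submodules, each isomorphic to a conic module; and for all sufficiently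
large `q`, every conic module is isomorphic to a direct summand of `R^{1/q}`. -/
theorem stmt_10
    (d t : ℕ) (hd : 1 ≤ d)
    (n : Fin t → ((Fin d → ℝ) →ₗ[ℝ] ℝ))
    (hne : ∀ i, n i ≠ 0)
    (hint : ∀ i (m : Fin d → ℤ), ∃ z : ℤ, n i (ιZ d m) = z)
    (hprim : ∀ i (z : ℤ), ∃ m : Fin d → ℤ, n i (ιZ d m) = z)
    (C : Set (Fin d → ℝ)) (hC : C = {x | ∀ i, 0 ≤ n i x})
    (hfull : (interior C).Nonempty)
    (hpointed : Submodule.span ℝ (Set.range n) = ⊤)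
    (hirr : ∀ i, C ⊂ {x | ∀ j, j ≠ i → 0 ≤ n j x})
    (k : Type) [Field k] :
    (∀ q : ℕ, 0 < q →
      ∃ (N : ℕ) (P : Fin N → Submodule ↥(toricRQ k d t n) (AddMonoidAlgebra k (Fin d → ℚ))),
        (∀ j, P j ≤ rootRq k d t n q) ∧
        iSupIndep P ∧
        (⨆ j, P j) = rootRq k d t n q ∧
        (∀ j, ∃ v : Fin d → ℝ,
          Nonempty (↥(P j) ≃ₗ[↥(toricRQ k d t n)] ↥(conicAQ k d t n v)))) ∧
    (∃ q₀ : ℕ, 0 < q₀ ∧ ∀ q : ℕ, q₀ ≤ q → ∀ v : Fin d → ℝ,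
      ∃ P Q : Submodule ↥(toricRQ k d t n) (AddMonoidAlgebra k (Fin d → ℚ)),
        P ≤ rootRq k d t n q ∧ Q ≤ rootRq k d t n q ∧
        P ⊓ Q = ⊥ ∧ P ⊔ Q = rootRq k d t n q ∧
        Nonempty (↥P ≃ₗ[↥(toricRQ k d t n)] ↥(conicAQ k d t n v))) := by
  constructor
  · intro q hq
    exact S10.part1 q hq
  · rw [hC] at hfull
    exact S10.part2 hd hne hint hfull hpointed
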